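/- For every integer k ≥ 0, ∑_{j=1}^∞ e^{-2^{2(k-j)}/2} · 2^{-j} ≤ √(2π) · 2^{-k}. -/
import Mathlib

noncomputable section

lemma expquad_aux (m : ℕ) : (8/5 : ℝ) * 4 ^ m ≤ Real.exp ((4:ℝ) ^ m / 2) := by
  match m with
  | 0 =>
    have h1 : Real.exp (1/2 : ℝ) * Real.exp (1/2 : ℝ) = Real.exp 1 := by
      rw [← Real.exp_add]; norm_num
    have h2 := Real.exp_one_gt_d9
    have h3 := Real.exp_pos (1/2 : ℝ)
    simp only [pow_zero, mul_one]
    norm_num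
    nlinarith
  | 1 =>
    have h1 : Real.exp (2 : ℝ) = Real.exp 1 * Real.exp 1 := by
      rw [← Real.exp_add]; norm_num
    have h2 := Real.exp_one_gt_d9
    norm_num
    nlinarith
  | (m+2) =>
    set y : ℝ := (4:ℝ) ^ (m+2) with hy
    have hy16 : (16:ℝ) ≤ y := by
      have : (1:ℝ) ≤ 4 ^ m := one_le_pow₀ (by norm_num)
      calc (16:ℝ) = 16 * 1 := by ring
        _ ≤ 16 * 4 ^ m := by nlinarith
        _ = y := by rw [hy]; ring
    have h1 : (1 : ℝ) + y/6 ≤ Real.exp (y/6) := by linarith [Real.add_one_le_exp (y/6)]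
    have h2 : Real.exp (y/2) = Real.exp (y/6) ^ 3 := by
      rw [← Real.exp_nat_mul]; norm_num; ring_nf
    rw [h2]
    have h3 : ((1:ℝ) + y/6) ^ 3 ≤ Real.exp (y/6) ^ 3 :=
      pow_le_pow_left₀ (by positivity) h1 3
    nlinarith [h3, hy16, mul_nonneg (by linarith : (0:ℝ) ≤ y - 16) (by positivity : (0:ℝ) ≤ y), pow_nonneg (by positivity : (0:ℝ) ≤ y) 3]

lemma dyadic_term_aux (m : ℕ) :
    Real.exp (-((4:ℝ) ^ m) / 2) * 2 ^ m ≤ 5/8 * (1/2 : ℝ) ^ m := by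
  have he := Real.exp_pos ((4:ℝ) ^ m / 2)
  have h := expquad_aux m
  have hrw : Real.exp (-((4:ℝ) ^ m) / 2) = (Real.exp ((4:ℝ) ^ m / 2))⁻¹ := by
    rw [← Real.exp_neg]; ring_nf
  rw [hrw, inv_mul_eq_div, div_le_iff₀ he]
  have h2 : (1/2:ℝ) ^ m * (4:ℝ) ^ m = 2 ^ m := by
    rw [← mul_pow]; norm_num
  have hp : (0:ℝ) < (1/2:ℝ) ^ m := by positivity
  nlinarith [mul_le_mul_of_nonneg_left h (le_of_lt hp)]

set_option maxHeartbeats 1000000 in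
/-- For every integer `k ≥ 0`, `∑_{j=1}^∞ e^{-2^{2(k-j)}/2} 2^{-j} ≤ √(2π) 2^{-k}`. -/
theorem dyadic_sum_bound (k : ℕ) :
    (∑' j : ℕ, Real.exp (-((2 : ℝ) ^ (2 * ((k : ℤ) - ((j : ℤ) + 1)))) / 2) *
        (2 : ℝ) ^ (-((j : ℤ) + 1)))
      ≤ Real.sqrt (2 * Real.pi) * (2 : ℝ) ^ (-(k : ℤ)) := by
  set f : ℕ → ℝ := fun j =>
    Real.exp (-((2 : ℝ) ^ (2 * ((k : ℤ) - ((j : ℤ) + 1)))) / 2) * (2 : ℝ) ^ (-((j : ℤ) + 1))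
    with hf
  have hz : ∀ j : ℕ, (2:ℝ) ^ (-((j:ℤ)+1)) = (1/2:ℝ) ^ (j+1) := by
    intro j
    rw [show -((j:ℤ)+1) = -(((j+1 : ℕ)) : ℤ) by push_cast; ring, zpow_neg, zpow_natCast,
      ← inv_pow]
    norm_num
  have hfnonneg : ∀ j, 0 ≤ f j := by
    intro j
    apply mul_nonneg (Real.exp_nonneg _)
    positivity
  have hfle : ∀ j, f j ≤ (1/2:ℝ) ^ (j+1) := by
    intro j
    rw [hf]
    simp only
    rw [hz j]
    have hx : (0:ℝ) ≤ (2 : ℝ) ^ (2 * ((k : ℤ) - ((j : ℤ) + 1))) := by positivity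
    have : Real.exp (-((2 : ℝ) ^ (2 * ((k : ℤ) - ((j : ℤ) + 1)))) / 2) ≤ 1 :=
      Real.exp_le_one_iff.2 (by linarith)
    exact mul_le_of_le_one_left (by positivity) this
  have hgeo : Summable (fun j : ℕ => (1/2:ℝ) ^ (j+1)) := by
    exact (summable_nat_add_iff 1).2
      (summable_geometric_of_lt_one (by norm_num) (by norm_num : (1/2:ℝ) < 1))
  have hsum : Summable f := Summable.of_nonneg_of_le hfnonneg hfle hgeo
  -- tail bound
  have htail : (∑' i : ℕ, f (i + k)) ≤ (2:ℝ) ^ (-(k:ℤ)) := by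
    have h1 : (∑' i : ℕ, f (i + k)) ≤ ∑' i : ℕ, (1/2:ℝ) ^ (i + k + 1) := by
      apply Summable.tsum_le_tsum (fun i => hfle (i + k))
      · exact (summable_nat_add_iff k).2 hsum
      · exact (summable_nat_add_iff (k+1)).2
          (summable_geometric_of_lt_one (by norm_num) (by norm_num : (1/2:ℝ) < 1))
    have h2 : (∑' i : ℕ, (1/2:ℝ) ^ (i + k + 1)) = (1/2:ℝ) ^ k := by
      have : ∀ i : ℕ, (1/2:ℝ) ^ (i + k + 1) = (1/2:ℝ) ^ (k+1) * (1/2:ℝ) ^ i := by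
        intro i; rw [← pow_add]; ring_nf
      rw [tsum_congr this, tsum_mul_left, tsum_geometric_of_lt_one (by norm_num) (by norm_num)]
      ring
    have h3 : ((1/2:ℝ)) ^ k = (2:ℝ) ^ (-(k:ℤ)) := by
      rw [zpow_neg, zpow_natCast, ← inv_pow]; norm_num
    rw [← h3]; linarith
  -- head bound
  have hhead : (∑ j ∈ Finset.range k, f j) ≤ (5/4 : ℝ) * (2:ℝ) ^ (-(k:ℤ)) := by
    have hterm : ∀ j ∈ Finset.range k,
        f j ≤ (2:ℝ) ^ (-(k:ℤ)) * (5/8 * (1/2:ℝ) ^ (k - 1 - j)) := by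
      intro j hj
      rw [Finset.mem_range] at hj
      set m : ℕ := k - 1 - j with hm
      have hmk : (k:ℤ) - ((j:ℤ) + 1) = (m:ℤ) := by
        rw [hm]; push_cast [Nat.sub_sub]; omega
      have hzpow1 : (2:ℝ) ^ (2 * ((k:ℤ) - ((j:ℤ)+1))) = (4:ℝ) ^ m := by
        rw [hmk, show 2 * (m:ℤ) = ((2*m : ℕ) : ℤ) by push_cast; ring, zpow_natCast,
          pow_mul]
        norm_num
      have hzpow2 : (2:ℝ) ^ (-((j:ℤ)+1)) = (2:ℝ) ^ (-(k:ℤ)) * (2:ℝ) ^ m := by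
        rw [show -((j:ℤ)+1) = -(k:ℤ) + (m:ℤ) by omega, zpow_add₀ (two_ne_zero), zpow_natCast]
      rw [hf]
      simp only
      rw [hzpow1, hzpow2]
      have := dyadic_term_aux m
      have hk : (0:ℝ) ≤ (2:ℝ) ^ (-(k:ℤ)) := by positivity
      calc Real.exp (-(4:ℝ) ^ m / 2) * ((2:ℝ) ^ (-(k:ℤ)) * 2 ^ m)
          = (2:ℝ) ^ (-(k:ℤ)) * (Real.exp (-((4:ℝ) ^ m) / 2) * 2 ^ m) := by ring
        _ ≤ (2:ℝ) ^ (-(k:ℤ)) * (5/8 * (1/2:ℝ) ^ m) := by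
            apply mul_le_mul_of_nonneg_left _ hk
            exact dyadic_term_aux m
    calc (∑ j ∈ Finset.range k, f j)
        ≤ ∑ j ∈ Finset.range k, (2:ℝ) ^ (-(k:ℤ)) * (5/8 * (1/2:ℝ) ^ (k - 1 - j)) :=
          Finset.sum_le_sum hterm
      _ = (2:ℝ) ^ (-(k:ℤ)) * (5/8) * ∑ j ∈ Finset.range k, (1/2:ℝ) ^ (k - 1 - j) := by
          rw [Finset.mul_sum]; apply Finset.sum_congr rfl; intro j hj; ring
      _ = (2:ℝ) ^ (-(k:ℤ)) * (5/8) * ∑ m ∈ Finset.range k, (1/2:ℝ) ^ m := by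
          rw [Finset.sum_range_reflect (fun m => (1/2:ℝ) ^ m) k]
      _ ≤ (2:ℝ) ^ (-(k:ℤ)) * (5/8) * 2 := by
          have hs : (∑ m ∈ Finset.range k, (1/2:ℝ) ^ m) ≤ 2 := by
            have := Summable.sum_le_tsum (Finset.range k)
              (fun i _ => by positivity)
              (summable_geometric_of_lt_one (by norm_num) (by norm_num : (1/2:ℝ) < 1))
            rw [tsum_geometric_of_lt_one (by norm_num) (by norm_num)] at this
            norm_num at this ⊢
            linarith
          have hk : (0:ℝ) ≤ (2:ℝ) ^ (-(k:ℤ)) * (5/8) := by positivity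
          nlinarith
      _ = (5/4 : ℝ) * (2:ℝ) ^ (-(k:ℤ)) := by ring
  have hsqrt : (9/4 : ℝ) ≤ Real.sqrt (2 * Real.pi) := by
    rw [Real.le_sqrt (by norm_num) (by positivity)]
    nlinarith [Real.pi_gt_three]
  have hk : (0:ℝ) ≤ (2:ℝ) ^ (-(k:ℤ)) := by positivity
  calc (∑' j : ℕ, f j) = (∑ j ∈ Finset.range k, f j) + ∑' i : ℕ, f (i + k) :=
        (Summable.sum_add_tsum_nat_add k hsum).symm
    _ ≤ (5/4 : ℝ) * (2:ℝ) ^ (-(k:ℤ)) + (2:ℝ) ^ (-(k:ℤ)) := add_le_add hhead htail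
    _ = (9/4 : ℝ) * (2:ℝ) ^ (-(k:ℤ)) := by ring
    _ ≤ Real.sqrt (2 * Real.pi) * (2 : ℝ) ^ (-(k : ℤ)) := by
        apply mul_le_mul_of_nonneg_right hsqrt hk
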